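/- A priori stability estimate for the first-order IEQ-DG linear system (from the proof of Theorem 3.1): let Δt > 0, let T : H → H be a self-adjoint bounded linear operator, and let f ∈ H. If u, q ∈ V satisfy, for all φ, ψ ∈ V, (1/Δt)⟨u, φ⟩ + (1/2)⟨T(T u), φ⟩ + b(u, φ) + A(φ, q) = ⟨f, φ⟩ and A(u, ψ) = ⟨q, ψ⟩, then ‖u‖² + 2Δt ‖q‖² + 2Δt b(u, u) ≤ Δt² ‖f‖². -/

import Mathlib

/-- A priori stability estimate for the first-order IEQ-DG linear system
(from the proof of Theorem 3.1). -/
theorem stmt_2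
    {H : Type*} [NormedAddCommGroup H] [InnerProductSpace ℝ H] [CompleteSpace H]
    (V : Submodule ℝ H) [FiniteDimensional ℝ V]
    (A : V →ₗ[ℝ] V →ₗ[ℝ] ℝ)
    (b : V →ₗ[ℝ] V →ₗ[ℝ] ℝ)
    (hb_symm : ∀ x y : V, b x y = b y x)
    (hb_pos : ∀ x : V, 0 ≤ b x x)
    (Δt : ℝ) (hΔt : 0 < Δt)
    (T : H →L[ℝ] H)
    (hT : ∀ x y : H, (inner ℝ (T x) y : ℝ) = (inner ℝ x (T y) : ℝ))
    (f : H) (u q : V)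
    (heq1 : ∀ φ : V,
      (1/Δt) * (inner ℝ (u : H) (φ : H) : ℝ) + (1/2) * (inner ℝ (T (T (u : H))) (φ : H) : ℝ)
        + b u φ + A φ q = (inner ℝ f (φ : H) : ℝ))
    (heq2 : ∀ ψ : V, A u ψ = (inner ℝ (q : H) (ψ : H) : ℝ)) :
    ‖(u : H)‖^2 + 2 * Δt * ‖(q : H)‖^2 + 2 * Δt * b u u ≤ Δt^2 * ‖f‖^2 := by
  have h1 := heq1 u
  have h2 := heq2 q
  have huu : (inner ℝ (u : H) (u : H) : ℝ) = ‖(u : H)‖^2 := real_inner_self_eq_norm_sq _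
  have hqq : (inner ℝ (q : H) (q : H) : ℝ) = ‖(q : H)‖^2 := real_inner_self_eq_norm_sq _
  have hTT : (inner ℝ (T (T (u : H))) (u : H) : ℝ) = ‖T (u : H)‖^2 := by
    rw [hT, real_inner_self_eq_norm_sq]
  have hTnn : (0:ℝ) ≤ ‖T (u : H)‖^2 := sq_nonneg _
  have hfu : (inner ℝ f (u : H) : ℝ) ≤ ‖f‖ * ‖(u : H)‖ := real_inner_le_norm _ _
  have hAuq : A u q = ‖(q : H)‖^2 := by rw [h2, hqq]
  rw [huu, hTT, hAuq] at h1
  have hb := hb_pos u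
  have key : ‖(u : H)‖^2 + Δt * ‖(q : H)‖^2 + Δt * b u u ≤ Δt * (‖f‖ * ‖(u : H)‖) := by
    have := mul_le_mul_of_nonneg_left hfu (le_of_lt hΔt)
    have h1' : Δt * ((1/Δt) * ‖(u : H)‖^2 + (1/2) * ‖T (u : H)‖^2 + b u u + ‖(q : H)‖^2)
        = Δt * (inner ℝ f (u : H) : ℝ) := by rw [h1]
    have hΔt' : Δt ≠ 0 := ne_of_gt hΔt
    field_simp at h1'
    nlinarith [mul_nonneg (le_of_lt hΔt) hTnn]
  nlinarith [sq_nonneg (Δt * ‖f‖ - ‖(u : H)‖)]
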